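/- arXiv:0912.2051 — 4 statements merged into one kernel-verified Lean document; each statement's English description precedes it below -/
import Mathlib

section
/- For any positive integer u and any positive integer n, if ū ∈ {1, ..., p^n − 1} is the unique integer with u ≡ ū (mod p^n − 1), then the p-adic digit sum satisfies s_p(u) ≥ s_p(ū). -/
/-- `sp p n` is the sum of the base-`p` digits of `n`. -/
def sp (p n : ℕ) : ℕ := (Nat.digits p n).sum

/-- Digit sums are subadditive (for prime base), via Legendre's formula. -/
lemma sp_add_le (p : ℕ) (hp : p.Prime) (a b : ℕ) :
    sp p (a + b) ≤ sp p a + sp p b := by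
  haveI : Fact p.Prime := ⟨hp⟩
  have hdvd : p ^ (padicValNat p (Nat.factorial a) + padicValNat p (Nat.factorial b)) ∣
      Nat.factorial (a + b) := by
    calc p ^ (padicValNat p (Nat.factorial a) + padicValNat p (Nat.factorial b))
        = p ^ padicValNat p (Nat.factorial a) * p ^ padicValNat p (Nat.factorial b) :=
          pow_add p _ _
      _ ∣ Nat.factorial a * Nat.factorial b :=
          mul_dvd_mul pow_padicValNat_dvd pow_padicValNat_dvd
      _ ∣ Nat.factorial (a + b) := Nat.factorial_mul_factorial_dvd_factorial_add a b
  have hle : padicValNat p (Nat.factorial a) + padicValNat p (Nat.factorial b) ≤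
      padicValNat p (Nat.factorial (a + b)) :=
    (padicValNat_dvd_iff_le (Nat.factorial_ne_zero _)).mp hdvd
  have hLa := sub_one_mul_padicValNat_factorial (p := p) a
  have hLb := sub_one_mul_padicValNat_factorial (p := p) b
  have hLab := sub_one_mul_padicValNat_factorial (p := p) (a + b)
  have hsa : (p.digits a).sum ≤ a := Nat.digit_sum_le p a
  have hsb : (p.digits b).sum ≤ b := Nat.digit_sum_le p b
  have hsab : (p.digits (a + b)).sum ≤ a + b := Nat.digit_sum_le p (a + b)
  have hmul : (p - 1) * (padicValNat p (Nat.factorial a) + padicValNat p (Nat.factorial b)) ≤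
      (p - 1) * padicValNat p (Nat.factorial (a + b)) := Nat.mul_le_mul_left _ hle
  rw [Nat.mul_add, hLa, hLb, hLab] at hmul
  simp only [sp]
  omega

/-- Splitting off the low `n` base-`p` digits splits the digit sum. -/
lemma sp_split (p : ℕ) (hp : p.Prime) (n q r : ℕ) (hq : 0 < q) (hr : r < p ^ n) :
    sp p (r + p ^ n * q) = sp p r + sp p q := by
  have hb : 1 < p := hp.one_lt
  have hlen : (p.digits r).length ≤ n := by
    rcases Nat.eq_zero_or_pos r with rfl | hr0
    · simp
    · rw [Nat.digits_len p r hb hr0.ne']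
      have : Nat.log p r < n := Nat.log_lt_of_lt_pow hr0.ne' hr
      omega
  have key := Nat.digits_append_zeroes_append_digits (b := p) (k := n - (p.digits r).length)
      (m := q) (n := r) hb hq
  rw [Nat.add_sub_cancel' hlen] at key
  have h2 : sp p (r + p ^ n * q) = ((p.digits r) ++ List.replicate (n - (p.digits r).length) 0
      ++ p.digits q).sum := by rw [key]; rfl
  rw [h2]
  simp [sp, List.sum_append]

theorem stmt_0 (p : ℕ) (hp : p.Prime) (n : ℕ) (hn : 0 < n)
    (u ub : ℕ) (hu : 0 < u) (h1 : 1 ≤ ub) (h2 : ub ≤ p ^ n - 1)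
    (hcong : u ≡ ub [MOD p ^ n - 1]) :
    sp p ub ≤ sp p u := by
  have hb : 1 < p := hp.one_lt
  have hN : 2 ≤ p ^ n := by
    calc 2 ≤ p := hb
      _ = p ^ 1 := (pow_one p).symm
      _ ≤ p ^ n := Nat.pow_le_pow_right (by omega) hn
  induction u using Nat.strong_induction_on with
  | _ u ih =>
    by_cases hsmall : u < p ^ n
    · -- then u = ub
      have hm : u % (p ^ n - 1) = ub % (p ^ n - 1) := hcong
      have hu2 : u ≤ p ^ n - 1 := by omega
      have key : u = ub := by
        rcases eq_or_lt_of_le hu2 with he | hl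
        · rcases eq_or_lt_of_le h2 with he2 | hl2
          · omega
          · exfalso
            have e1 : ub % (p ^ n - 1) = ub := Nat.mod_eq_of_lt hl2
            have e2 : u % (p ^ n - 1) = 0 := by rw [he]; exact Nat.mod_self _
            omega
        · rcases eq_or_lt_of_le h2 with he2 | hl2
          · exfalso
            have e1 : u % (p ^ n - 1) = u := Nat.mod_eq_of_lt hl
            have e2 : ub % (p ^ n - 1) = 0 := by rw [← he2]; exact Nat.mod_self _
            omega
          · have e1 : u % (p ^ n - 1) = u := Nat.mod_eq_of_lt hl
            have e2 : ub % (p ^ n - 1) = ub := Nat.mod_eq_of_lt hl2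
            omega
      rw [key]
    · push_neg at hsmall
      obtain ⟨q, r, hrlt, hu'⟩ : ∃ q r, r < p ^ n ∧ u = r + p ^ n * q :=
        ⟨u / p ^ n, u % p ^ n, Nat.mod_lt _ (by omega), (Nat.mod_add_div u (p ^ n)).symm⟩
      have hq1 : 1 ≤ q := by
        rcases Nat.eq_zero_or_pos q with rfl | h
        · simp at hu'; omega
        · exact h
      have hmulge : 2 * q ≤ p ^ n * q := Nat.mul_le_mul_right q hN
      have hlt : q + r < u := by omega
      have hsum : sp p u = sp p r + sp p q := by
        rw [hu']; exact sp_split p hp n q r hq1 hrlt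
      have h1pn : (1 : ℕ) ≡ p ^ n [MOD p ^ n - 1] := by
        refine (Nat.modEq_iff_dvd' (by omega)).mpr ?_
        exact dvd_refl _
      have hcq : q + r ≡ u [MOD p ^ n - 1] := by
        rw [hu']
        simpa [one_mul, add_comm] using ((h1pn.mul_right q).add_left r)
      have := ih (q + r) hlt (by omega) (hcq.trans hcong)
      calc sp p ub ≤ sp p (q + r) := this
        _ ≤ sp p q + sp p r := sp_add_le p hp q r
        _ = sp p u := by omega
end

section
/- Let n be a nonnegative integer with base-p expansion n = n₀ + p·n₁ + ⋯ + p^t·n_t where 0 ≤ nᵢ ≤ p − 1. Then n! ≡ (−p)^a · n₀!·n₁!·⋯·n_{t-1}! · n_t! (mod p^{a+1}), where a = (n − s_p(n))/(p − 1). (Here the quantity a is a nonnegative integer since n ≡ s_p(n) mod p−1.) -/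
namespace AntonAux

open Nat

/-- Product of the integers in `[1, n]` not divisible by `p`. -/
def W (p n : ℕ) : ℕ := ∏ k ∈ Finset.range n, if p ∣ (k + 1) then 1 else (k + 1)

lemma factorial_eq (p : ℕ) (n : ℕ) : n ! = p ^ (n / p) * (n / p)! * W p n := by
  induction n with
  | zero => simp [W]
  | succ n ih =>
    rw [W, Finset.prod_range_succ, ← W]
    by_cases h : p ∣ (n + 1)
    · have hq : (n + 1) / p = n / p + 1 := by rw [Nat.succ_div, if_pos h]
      have hn1 : n + 1 = (n + 1) / p * p := (Nat.div_mul_cancel h).symm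
      rw [if_pos h, mul_one, Nat.factorial_succ, ih, hq, Nat.factorial_succ]
      calc (n + 1) * (p ^ (n / p) * (n / p)! * W p n)
          = ((n + 1) / p * p) * (p ^ (n / p) * (n / p)! * W p n) := by rw [← hn1]
        _ = p ^ (n / p + 1) * ((n / p + 1) * (n / p)!) * W p n := by rw [hq]; ring
    · have hq : (n + 1) / p = n / p := by rw [Nat.succ_div, if_neg h]; ring
      rw [if_neg h, Nat.factorial_succ, ih, hq]; ring

lemma mod_cases (p : ℕ) (hp : 0 < p) (n : ℕ) :
    (p ∣ n + 1 ∧ n % p = p - 1 ∧ (n + 1) % p = 0) ∨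
      (¬ p ∣ n + 1 ∧ (n + 1) % p = n % p + 1) := by
  have h6 := Nat.div_add_mod n p
  have h7 : n % p < p := Nat.mod_lt n hp
  by_cases h : p ∣ n + 1
  · left
    have hk : p ∣ n % p + 1 := by
      have : p ∣ p * (n / p) + (n % p + 1) := by
        rw [show p * (n / p) + (n % p + 1) = n + 1 by omega]; exact h
      exact (Nat.dvd_add_right (dvd_mul_right p (n / p))).mp this
    have := Nat.le_of_dvd (by omega) hk
    exact ⟨h, by omega, Nat.mod_eq_zero_of_dvd h⟩
  · right
    refine ⟨h, ?_⟩
    have hne : n % p + 1 < p := by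
      rcases Nat.lt_or_ge (n % p + 1) p with h1 | h1
      · exact h1
      · exfalso; apply h
        have he : n % p + 1 = p := by omega
        have hm : p * (n / p + 1) = p * (n / p) + p := by ring
        exact ⟨n / p + 1, by omega⟩
    calc (n + 1) % p = (p * (n / p) + (n % p + 1)) % p := by
          rw [show p * (n / p) + (n % p + 1) = n + 1 by omega]
      _ = (n % p + 1) % p := by rw [Nat.mul_add_mod]
      _ = n % p + 1 := Nat.mod_eq_of_lt hne

lemma W_mod (p : ℕ) [hp : Fact p.Prime] (n : ℕ) :
    ((W p n : ZMod p)) = (-1) ^ (n / p) * ((n % p)! : ZMod p) := by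
  induction n with
  | zero => simp [W]
  | succ n ih =>
    have hpos : 0 < p := hp.out.pos
    rw [W, Finset.prod_range_succ, ← W]
    rcases mod_cases p hpos n with ⟨h, hmod, hmod1⟩ | ⟨h, hmod1⟩
    · have hq : (n + 1) / p = n / p + 1 := by rw [Nat.succ_div, if_pos h]
      rw [if_pos h, hq, hmod1]
      push_cast
      rw [ih, hmod, ZMod.wilsons_lemma]
      simp [pow_succ]
    · have hq : (n + 1) / p = n / p := by rw [Nat.succ_div, if_neg h]; ring
      rw [if_neg h, hq, hmod1, Nat.factorial_succ]
      push_cast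
      rw [ih, ← ZMod.natCast_mod n p]
      ring

lemma nu_rec (p : ℕ) [hp : Fact p.Prime] (n : ℕ) (hn : 0 < n) :
    padicValNat p (n !) = n / p + padicValNat p ((n / p)!) := by
  have h1 := sub_one_mul_padicValNat_factorial (p := p) n
  have h2 := sub_one_mul_padicValNat_factorial (p := p) (n / p)
  have h3 : (Nat.digits p n).sum = n % p + (Nat.digits p (n / p)).sum := by
    rw [Nat.digits_def' hp.out.one_lt hn]; simp
  have h4 := Nat.digit_sum_le p n
  have h5 := Nat.digit_sum_le p (n / p)
  have h6 := Nat.div_add_mod n p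
  have hp2 : 2 ≤ p := hp.out.two_le
  have hq : n / p ≤ p * (n / p) := Nat.le_mul_of_pos_left _ hp.out.pos
  have hmul : (p - 1) * (n / p) + n / p = p * (n / p) := by
    rw [Nat.sub_one_mul]; exact Nat.sub_add_cancel hq
  have hstep : (p - 1) * padicValNat p (n !) =
      (p - 1) * (n / p + padicValNat p ((n / p)!)) := by
    rw [Nat.mul_add, h1, h2]
    omega
  exact Nat.eq_of_mul_eq_mul_left (by omega) hstep

lemma anton (p : ℕ) [hp : Fact p.Prime] (n : ℕ) :
    (n ! : ℤ) ≡ (-(p : ℤ)) ^ (padicValNat p (n !)) *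
      ((Nat.digits p n).map fun d => (d ! : ℤ)).prod
      [ZMOD (p : ℤ) ^ (padicValNat p (n !) + 1)] := by
  induction n using Nat.strong_induction_on with
  | _ n IH =>
  rcases Nat.eq_zero_or_pos n with rfl | hn
  · simp [Nat.factorial, padicValNat.one]
  · have hqlt : n / p < n := Nat.div_lt_self hn hp.out.one_lt
    have ih := IH (n / p) hqlt
    set q := n / p with hqdef
    set ν := padicValNat p (n !) with hν
    set νq := padicValNat p (q !) with hνq
    set Pq := ((Nat.digits p q).map fun d => (d ! : ℤ)).prod with hPq
    have hrec : ν = q + νq := nu_rec p n hn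
    have hfac : (n ! : ℤ) = (p : ℤ) ^ q * (q ! : ℤ) * (W p n : ℤ) := by
      exact_mod_cast congrArg (Nat.cast (R := ℤ)) (factorial_eq p n)
    have hdig : Nat.digits p n = n % p :: Nat.digits p q := Nat.digits_def' hp.out.one_lt hn
    have hW : ((W p n : ℤ)) ≡ (-1) ^ q * ((n % p)! : ℤ) [ZMOD (p : ℤ)] := by
      refine (ZMod.intCast_eq_intCast_iff _ _ _).mp ?_
      push_cast
      exact W_mod p n
    have H1 : (n ! : ℤ) ≡ (p : ℤ) ^ q * ((-(p : ℤ)) ^ νq * Pq) * (W p n : ℤ)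
        [ZMOD (p : ℤ) ^ (ν + 1)] := by
      rw [hfac]
      have h := (ih.mul_left' (c := (p : ℤ) ^ q)).mul_right (W p n : ℤ)
      rwa [← pow_add, show q + (νq + 1) = ν + 1 by omega] at h
    have H2 : (p : ℤ) ^ q * ((-(p : ℤ)) ^ νq * Pq) * (W p n : ℤ) ≡
        (-(p : ℤ)) ^ ν * (((n % p)! : ℤ) * Pq) [ZMOD (p : ℤ) ^ (ν + 1)] := by
      have h := ((hW.mul_left' (c := (p : ℤ) ^ ν)).mul_left ((-1 : ℤ) ^ νq)).mul_right Pq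
      rw [← pow_succ] at h
      have e1 : (p : ℤ) ^ q * ((-(p : ℤ)) ^ νq * Pq) * (W p n : ℤ) =
          (-1 : ℤ) ^ νq * ((p : ℤ) ^ ν * (W p n : ℤ)) * Pq := by
        rw [hrec, neg_pow]; ring
      have e2 : (-1 : ℤ) ^ νq * ((p : ℤ) ^ ν * ((-1) ^ q * ((n % p)! : ℤ))) * Pq =
          (-(p : ℤ)) ^ ν * (((n % p)! : ℤ) * Pq) := by
        rw [hrec, neg_pow]; ring
      rw [e1, ← e2]
      exact h
    rw [hdig, List.map_cons, List.prod_cons]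
    exact H1.trans H2

end AntonAux

/-- Anton's congruence: `n! ≡ (−p)^a · n₀!⋯n_t!  (mod p^{a+1})`, where the `nᵢ` are the
base-`p` digits of `n` and `a = (n − s_p(n))/(p−1)`. -/
theorem stmt_4 (p : ℕ) (hp : p.Prime) (n : ℕ) (a : ℕ) (ha : a = (n - sp p n) / (p - 1)) :
    (Nat.factorial n : ℤ) ≡ (-(p : ℤ)) ^ a * ((Nat.digits p n).map fun d => (Nat.factorial d : ℤ)).prod
      [ZMOD (p : ℤ) ^ (a + 1)] := by
  haveI : Fact p.Prime := ⟨hp⟩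
  have hleg := sub_one_mul_padicValNat_factorial (p := p) n
  have ha' : a = padicValNat p (n.factorial) := by
    rw [ha, sp, ← hleg, Nat.mul_div_cancel_left _ (by have := hp.two_le; omega)]
  subst ha'
  exact AntonAux.anton p n
end

section
/- Let p be a prime and d₀ < p a positive integer, D = {1, 2, ..., d₀}. Then δ_{D,p} = (1/(p−1))·⌈(p−1)/d₀⌉. -/
/-- `sD p n D` is `s_{D,p}(n)`: the minimum of `∑_{d∈D} s_p(u_d)` over tuples
`(u_d)_{d∈D}` with `0 ≤ u_d ≤ p^n − 1`, `∑ u_d·d ≡ 0 (mod p^n − 1)` and `∑ u_d·d > 0`. -/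
noncomputable def sD (p n : ℕ) (D : Finset ℕ) : ℕ :=
  sInf {s : ℕ | ∃ u : ℕ → ℕ, (∀ d ∈ D, u d ≤ p ^ n - 1) ∧
    (p ^ n - 1) ∣ (∑ d ∈ D, u d * d) ∧ 0 < ∑ d ∈ D, u d * d ∧ s = ∑ d ∈ D, sp p (u d)}


open Finset

lemma sum_pred_pow (p : ℕ) (hp : 1 ≤ p) (m : ℕ) :
    ∑ i ∈ range m, (p - 1) * p ^ i = p ^ m - 1 := by
  induction m with
  | zero => simp
  | succ m ih =>
    rw [Finset.sum_range_succ, ih]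
    have h1 : (p - 1) * p ^ m + p ^ m = p * p ^ m := by
      have h : (p - 1) + 1 = p := by omega
      calc (p - 1) * p ^ m + p ^ m = ((p - 1) + 1) * p ^ m := by ring
        _ = p * p ^ m := by rw [h]
    have h2 : p ^ (m + 1) = p * p ^ m := by rw [pow_succ]; ring
    have h3 : 1 ≤ p ^ m := Nat.one_le_pow _ _ hp
    omega

lemma sp_rec (p n : ℕ) (hp : 2 ≤ p) : sp p n = n % p + sp p (n / p) := by
  rcases Nat.eq_zero_or_pos n with h | h
  · subst h; simp [sp]
  · rw [sp, Nat.digits_def' hp h]; simp [sp]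

lemma div_p_lt (p m n : ℕ) (hp : 2 ≤ p) (hn : n < p ^ (m + 1)) : n / p < p ^ m := by
  apply Nat.div_lt_of_lt_mul
  rw [← pow_succ']; exact hn

lemma sp_digits (p : ℕ) (hp : 2 ≤ p) :
    ∀ m n, n < p ^ m → sp p n = ∑ i ∈ range m, n / p ^ i % p := by
  intro m
  induction m with
  | zero =>
    intro n hn
    simp only [pow_zero, Nat.lt_one_iff] at hn
    subst hn; simp [sp]
  | succ m ih =>
    intro n hn
    rw [Finset.sum_range_succ' (fun i => n / p ^ i % p)]
    have h1 : ∀ i : ℕ, n / p ^ (i + 1) % p = (n / p) / p ^ i % p := by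
      intro i; rw [Nat.div_div_eq_div_mul, ← pow_succ']
    simp only [h1, pow_zero, Nat.div_one]
    rw [← ih (n / p) (div_p_lt p m n hp hn)]
    rw [sp_rec p n hp]; omega

lemma expand_digits (p : ℕ) (hp : 2 ≤ p) :
    ∀ m n, n < p ^ m → ∑ i ∈ range m, n / p ^ i % p * p ^ i = n := by
  intro m
  induction m with
  | zero =>
    intro n hn
    simp only [pow_zero, Nat.lt_one_iff] at hn
    subst hn; simp
  | succ m ih =>
    intro n hn
    rw [Finset.sum_range_succ' (fun i => n / p ^ i % p * p ^ i)]
    have h1 : ∀ i : ℕ, n / p ^ (i + 1) % p * p ^ (i + 1) = ((n / p) / p ^ i % p * p ^ i) * p := by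
      intro i
      have h2 : n / p ^ (i + 1) = n / p / p ^ i := by
        rw [Nat.div_div_eq_div_mul, ← pow_succ']
      rw [h2, pow_succ]; ring
    simp only [h1, pow_zero, Nat.div_one, mul_one]
    rw [← Finset.sum_mul]
    rw [ih (n / p) (div_p_lt p m n hp hn)]
    rw [mul_comm]
    exact Nat.div_add_mod n p

lemma digits_max (p : ℕ) (hp : 2 ≤ p) :
    ∀ m (B : ℕ → ℕ), (∀ i, i < m → B i ≤ p - 1) →
    (∑ i ∈ range m, B i * p ^ i = p ^ m - 1) → ∀ i, i < m → B i = p - 1 := by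
  intro m
  induction m with
  | zero => intro B _ _ i hi; omega
  | succ m ih =>
    intro B hB hsum i hi
    rw [Finset.sum_range_succ] at hsum
    have hle : ∑ i ∈ range m, B i * p ^ i ≤ p ^ m - 1 := by
      rw [← sum_pred_pow p (by omega) m]
      exact Finset.sum_le_sum fun i hi =>
        Nat.mul_le_mul_right _ (hB i (by simp at hi; omega))
    have hps : p ^ (m + 1) = p * p ^ m := by rw [pow_succ]; ring
    have h3 : 1 ≤ p ^ m := Nat.one_le_pow _ _ (by omega)
    have hBm : B m ≤ p - 1 := hB m (by omega)
    have hBmle : B m * p ^ m ≤ (p - 1) * p ^ m := Nat.mul_le_mul_right _ hBm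
    have hp1 : (p - 1) * p ^ m + p ^ m = p * p ^ m := by
      have h : (p - 1) + 1 = p := by omega
      calc (p - 1) * p ^ m + p ^ m = ((p - 1) + 1) * p ^ m := by ring
        _ = p * p ^ m := by rw [h]
    have hBmeq : B m * p ^ m = (p - 1) * p ^ m := by omega
    rcases Nat.lt_or_ge i m with h | h
    · apply ih B (fun j hj => hB j (by omega)) _ i h
      omega
    · have hieq : i = m := by omega
      subst hieq
      exact Nat.eq_of_mul_eq_mul_right (by omega) hBmeq

lemma carry_main (p d₀ m : ℕ) (hp : 2 ≤ p) (hd : 0 < d₀) (hdp : d₀ < p) (hm : 2 ≤ m) :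
    ∀ n (B : ℕ → ℕ), (∑ i ∈ range m, B i ≤ n) →
    (p ^ m - 1) ∣ ∑ i ∈ range m, B i * p ^ i →
    0 < ∑ i ∈ range m, B i * p ^ i →
    m * ((p - 2) / d₀ + 1) ≤ ∑ i ∈ range m, (B i + (d₀ - 1)) / d₀ := by
  intro n
  induction n with
  | zero =>
    intro B hB hdvd hpos
    have hz : ∑ i ∈ range m, B i * p ^ i = 0 := by
      apply Finset.sum_eq_zero
      intro i hi
      have : B i = 0 := by
        have h1 : B i ≤ ∑ j ∈ range m, B j := Finset.single_le_sum (fun _ _ => Nat.zero_le _) hi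
        omega
      simp [this]
    omega
  | succ n ih =>
    intro B hB hdvd hpos
    by_cases hall : ∀ i ∈ range m, B i ≤ p - 1
    · -- terminal case
      have hle : ∑ i ∈ range m, B i * p ^ i ≤ p ^ m - 1 := by
        rw [← sum_pred_pow p (by omega) m]
        exact Finset.sum_le_sum fun i hi => Nat.mul_le_mul_right _ (hall i hi)
      have hge : p ^ m - 1 ≤ ∑ i ∈ range m, B i * p ^ i := Nat.le_of_dvd hpos hdvd
      have heq : ∑ i ∈ range m, B i * p ^ i = p ^ m - 1 := le_antisymm hle hge
      have hmax := digits_max p hp m B (fun i hi => hall i (Finset.mem_range.mpr hi)) heq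
      have hc : ∀ i ∈ range m, (B i + (d₀ - 1)) / d₀ = (p - 2) / d₀ + 1 := by
        intro i hi
        rw [hmax i (Finset.mem_range.mp hi)]
        have harg : p - 1 + (d₀ - 1) = p - 2 + d₀ := by omega
        rw [harg, Nat.add_div_right _ hd]
      rw [Finset.sum_congr rfl hc, Finset.sum_const, Finset.card_range, smul_eq_mul]

    · -- carry case
      push_neg at hall
      obtain ⟨i, hi, hip'⟩ := hall
      have hip : p ≤ B i := by omega
      have him : i < m := Finset.mem_range.mp hi
      set i' : ℕ := if i = m - 1 then 0 else i + 1 with hi'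
      have hne : i' ≠ i := by
        rcases eq_or_ne i (m - 1) with h | h <;> simp [hi', h] <;> omega
      have hi'm : i' ∈ range m := by
        rcases eq_or_ne i (m - 1) with h | h <;> simp [hi', h] <;> omega
      set B' : ℕ → ℕ := fun j => if j = i then B i - p else if j = i' then B j + 1 else B j
        with hB'def
      have hB'i : B' i = B i - p := by simp [hB'def]
      have hB'i' : B' i' = B i' + 1 := by simp [hB'def, hne, Ne.symm hne]
      have hB'o : ∀ j, j ≠ i → j ≠ i' → B' j = B j := by
        intro j h1 h2; simp [hB'def, h1, h2]
      have key : ∀ f : ℕ → ℕ, ∑ j ∈ range m, f j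
          = f i + (f i' + ∑ j ∈ ((range m).erase i).erase i', f j) := by
        intro f
        rw [Finset.add_sum_erase _ f (Finset.mem_erase_of_ne_of_mem hne hi'm)]
        rw [Finset.add_sum_erase _ f hi]
      have hrest : ∀ f g : ℕ → ℕ, (∀ j, j ≠ i → j ≠ i' → f j = g j) →
          ∑ j ∈ ((range m).erase i).erase i', f j = ∑ j ∈ ((range m).erase i).erase i', g j := by
        intro f g h
        apply Finset.sum_congr rfl
        intro j hj
        have h2 := Finset.mem_erase.mp hj
        have h3 := Finset.mem_erase.mp h2.2
        exact h j h3.1 h2.1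
      -- fuel decreases
      have hfuel : ∑ j ∈ range m, B' j ≤ n := by
        have e1 := key B'
        have e2 := key B
        rw [hB'i, hB'i', hrest B' B hB'o] at e1
        omega
      -- ceiling sum does not increase
      have hceil : ∑ j ∈ range m, (B' j + (d₀ - 1)) / d₀
          ≤ ∑ j ∈ range m, (B j + (d₀ - 1)) / d₀ := by
        have e1 := key (fun j => (B' j + (d₀ - 1)) / d₀)
        have e2 := key (fun j => (B j + (d₀ - 1)) / d₀)
        rw [hB'i, hB'i', hrest (fun j => (B' j + (d₀ - 1)) / d₀)
          (fun j => (B j + (d₀ - 1)) / d₀) (fun j h1 h2 => by simp only [hB'o j h1 h2])] at e1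
        have h1 : (B i - p + (d₀ - 1)) / d₀ + 1 ≤ (B i + (d₀ - 1)) / d₀ := by
          have ha : (B i - p + (d₀ - 1)) + d₀ ≤ B i + (d₀ - 1) := by omega
          calc (B i - p + (d₀ - 1)) / d₀ + 1 = ((B i - p + (d₀ - 1)) + d₀) / d₀ :=
                (Nat.add_div_right _ hd).symm
            _ ≤ (B i + (d₀ - 1)) / d₀ := Nat.div_le_div_right ha
        have h2 : (B i' + 1 + (d₀ - 1)) / d₀ ≤ (B i' + (d₀ - 1)) / d₀ + 1 := by
          calc (B i' + 1 + (d₀ - 1)) / d₀ ≤ ((B i' + (d₀ - 1)) + d₀) / d₀ :=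
                Nat.div_le_div_right (by omega)
            _ = (B i' + (d₀ - 1)) / d₀ + 1 := Nat.add_div_right _ hd
        omega
      -- value sum analysis
      have e1v := key (fun j => B' j * p ^ j)
      have e2v := key (fun j => B j * p ^ j)
      rw [hB'i, hB'i', hrest (fun j => B' j * p ^ j)
        (fun j => B j * p ^ j) (fun j h1 h2 => by simp only [hB'o j h1 h2])] at e1v
      have hsub : (B i - p) * p ^ i + p * p ^ i = B i * p ^ i := by
        rw [← add_mul, Nat.sub_add_cancel hip]
      have hadd : (B i' + 1) * p ^ i' = B i' * p ^ i' + p ^ i' := by ring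
      have h1m : 1 ≤ p ^ m := Nat.one_le_pow _ _ (by omega)
      have h2m : 2 ≤ p ^ m := by
        calc 2 ≤ p := hp
          _ = p ^ 1 := (pow_one p).symm
          _ ≤ p ^ m := Nat.pow_le_pow_right (by omega) (by omega)
      rcases eq_or_ne i (m - 1) with hcase | hcase
      · have hi'0 : i' = 0 := by simp [hi', hcase]
        have hpm : p * p ^ i = p ^ m := by
          rw [hcase, ← pow_succ']
          congr 1
          omega
        obtain ⟨k, hk⟩ := hdvd
        have hterm : B i * p ^ i ≤ ∑ j ∈ range m, B j * p ^ j :=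
          Finset.single_le_sum (f := fun j => B j * p ^ j) (fun _ _ => Nat.zero_le _) hi
        have htb : p ^ m ≤ B i * p ^ i := by
          calc p ^ m = p * p ^ i := hpm.symm
            _ ≤ B i * p ^ i := Nat.mul_le_mul_right _ hip
        have hk2 : 2 ≤ k := by
          rcases Nat.lt_or_ge k 2 with h | h
          · interval_cases k <;> omega
          · exact h
        rw [hi'0] at e1v e2v
        simp only [pow_zero, mul_one] at e1v e2v
        have hmul : (p ^ m - 1) * (k - 1) + (p ^ m - 1) * 1 = (p ^ m - 1) * k := by
          rw [← Nat.mul_add]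
          congr 1
          omega
        have hnew : ∑ j ∈ range m, B' j * p ^ j = (p ^ m - 1) * (k - 1) := by omega
        have hpos' : 0 < ∑ j ∈ range m, B' j * p ^ j := by
          rw [hnew]
          exact Nat.mul_pos (by omega) (by omega)
        exact le_trans (ih B' hfuel ⟨k - 1, hnew⟩ hpos') hceil
      · have hi1 : i' = i + 1 := by simp [hi', hcase]
        have hpp : p ^ i' = p * p ^ i := by rw [hi1, pow_succ']
        have hnew : ∑ j ∈ range m, B' j * p ^ j = ∑ j ∈ range m, B j * p ^ j := by omega
        rw [← hnew] at hdvd hpos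
        exact le_trans (ih B' hfuel hdvd hpos) hceil

lemma carry_all (p d₀ m : ℕ) (hp : 2 ≤ p) (hd : 0 < d₀) (hdp : d₀ < p) (hm : 1 ≤ m)
    (B : ℕ → ℕ) (hdvd : (p ^ m - 1) ∣ ∑ i ∈ range m, B i * p ^ i)
    (hpos : 0 < ∑ i ∈ range m, B i * p ^ i) :
    m * ((p - 2) / d₀ + 1) ≤ ∑ i ∈ range m, (B i + (d₀ - 1)) / d₀ := by
  rcases eq_or_lt_of_le hm with h1 | h2
  · subst h1
    simp only [Finset.sum_range_one, pow_zero, mul_one, pow_one, one_mul] at hdvd hpos ⊢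
    have hB0 : p - 1 ≤ B 0 := Nat.le_of_dvd hpos hdvd
    have harg : p - 2 + d₀ ≤ B 0 + (d₀ - 1) := by omega
    calc (p - 2) / d₀ + 1 = (p - 2 + d₀) / d₀ := (Nat.add_div_right _ hd).symm
      _ ≤ (B 0 + (d₀ - 1)) / d₀ := Nat.div_le_div_right harg
  · exact carry_main p d₀ m hp hd hdp h2 (∑ i ∈ range m, B i) B le_rfl hdvd hpos

lemma sp_small (p n : ℕ) (hp : 2 ≤ p) (h : n < p) : sp p n = n := by
  rw [sp_rec p n hp, Nat.mod_eq_of_lt h, Nat.div_eq_of_lt h]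
  simp [sp]

lemma sD_lower (p d₀ m : ℕ) (hp : 2 ≤ p) (hd : 0 < d₀) (hdp : d₀ < p) (hm : 1 ≤ m)
    (s : ℕ)
    (hs : s ∈ {s : ℕ | ∃ u : ℕ → ℕ, (∀ d ∈ Finset.Icc 1 d₀, u d ≤ p ^ m - 1) ∧
      (p ^ m - 1) ∣ (∑ d ∈ Finset.Icc 1 d₀, u d * d) ∧ 0 < ∑ d ∈ Finset.Icc 1 d₀, u d * d ∧
      s = ∑ d ∈ Finset.Icc 1 d₀, sp p (u d)}) :
    m * ((p - 2) / d₀ + 1) ≤ s := by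
  obtain ⟨u, hub, hdvd, hpos, rfl⟩ := hs
  have hplt : ∀ d ∈ Finset.Icc 1 d₀, u d < p ^ m := by
    intro d hd'
    have h1 := hub d hd'
    have h2 : 1 ≤ p ^ m := Nat.one_le_pow _ _ (by omega)
    omega
  set B : ℕ → ℕ := fun i => ∑ d ∈ Finset.Icc 1 d₀, (u d / p ^ i % p) * d with hB
  have hsum2 : ∑ i ∈ range m, B i * p ^ i = ∑ d ∈ Finset.Icc 1 d₀, u d * d := by
    calc ∑ i ∈ range m, B i * p ^ i
        = ∑ i ∈ range m, ∑ d ∈ Finset.Icc 1 d₀, u d / p ^ i % p * d * p ^ i :=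
          Finset.sum_congr rfl (fun i _ => by rw [hB]; exact Finset.sum_mul _ _ _)
      _ = ∑ d ∈ Finset.Icc 1 d₀, ∑ i ∈ range m, u d / p ^ i % p * d * p ^ i := Finset.sum_comm
      _ = ∑ d ∈ Finset.Icc 1 d₀, u d * d := by
          apply Finset.sum_congr rfl
          intro d hd'
          have h3 : ∀ i, u d / p ^ i % p * d * p ^ i = (u d / p ^ i % p * p ^ i) * d :=
            fun i => by ring
          rw [Finset.sum_congr rfl fun i _ => h3 i, ← Finset.sum_mul,
            expand_digits p hp m (u d) (hplt d hd')]
  have hkey := carry_all p d₀ m hp hd hdp hm B (by rw [hsum2]; exact hdvd)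
    (by rw [hsum2]; exact hpos)
  have hci : ∀ i ∈ range m, (B i + (d₀ - 1)) / d₀ ≤ ∑ d ∈ Finset.Icc 1 d₀, u d / p ^ i % p := by
    intro i _
    have hb : B i ≤ (∑ d ∈ Finset.Icc 1 d₀, u d / p ^ i % p) * d₀ := by
      rw [hB, Finset.sum_mul]
      exact Finset.sum_le_sum fun d hd' => Nat.mul_le_mul_left _ (Finset.mem_Icc.mp hd').2
    calc (B i + (d₀ - 1)) / d₀
        ≤ ((∑ d ∈ Finset.Icc 1 d₀, u d / p ^ i % p) * d₀ + (d₀ - 1)) / d₀ :=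
          Nat.div_le_div_right (by omega)
      _ = ∑ d ∈ Finset.Icc 1 d₀, u d / p ^ i % p := by
          rw [mul_comm, Nat.mul_add_div hd, Nat.div_eq_of_lt (by omega), add_zero]
  calc m * ((p - 2) / d₀ + 1) ≤ ∑ i ∈ range m, (B i + (d₀ - 1)) / d₀ := hkey
    _ ≤ ∑ i ∈ range m, ∑ d ∈ Finset.Icc 1 d₀, u d / p ^ i % p := Finset.sum_le_sum hci
    _ = ∑ d ∈ Finset.Icc 1 d₀, ∑ i ∈ range m, u d / p ^ i % p := Finset.sum_comm
    _ = ∑ d ∈ Finset.Icc 1 d₀, sp p (u d) :=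
        Finset.sum_congr rfl fun d hd' => (sp_digits p hp m (u d) (hplt d hd')).symm

lemma sD_nonempty (p d₀ m : ℕ) (hp : 2 ≤ p) (hd : 0 < d₀) (hm : 1 ≤ m) :
    {s : ℕ | ∃ u : ℕ → ℕ, (∀ d ∈ Finset.Icc 1 d₀, u d ≤ p ^ m - 1) ∧
      (p ^ m - 1) ∣ (∑ d ∈ Finset.Icc 1 d₀, u d * d) ∧ 0 < ∑ d ∈ Finset.Icc 1 d₀, u d * d ∧
      s = ∑ d ∈ Finset.Icc 1 d₀, sp p (u d)}.Nonempty := by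
  have h1m : 1 ∈ Finset.Icc 1 d₀ := Finset.mem_Icc.mpr ⟨le_refl 1, hd⟩
  have hpm : 1 < p ^ m := Nat.one_lt_pow (by omega) (by omega)
  set u : ℕ → ℕ := fun d => if d = 1 then p ^ m - 1 else 0 with hu
  have hsum : ∑ d ∈ Finset.Icc 1 d₀, u d * d = p ^ m - 1 := by
    have h3 : ∀ d, u d * d = if d = 1 then (p ^ m - 1) * d else 0 := by
      intro d; rw [hu]; dsimp only; split <;> simp
    rw [Finset.sum_congr rfl fun d _ => h3 d, Finset.sum_ite_eq', if_pos h1m, mul_one]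
  refine ⟨∑ d ∈ Finset.Icc 1 d₀, sp p (u d), u, ?_, ?_, ?_, rfl⟩
  · intro d _; rw [hu]; dsimp only; split <;> omega
  · rw [hsum]
  · rw [hsum]; omega

lemma sD_upper1 (p d₀ : ℕ) (hp : 2 ≤ p) (hd : 0 < d₀) (hdp : d₀ < p) :
    sInf {s : ℕ | ∃ u : ℕ → ℕ, (∀ d ∈ Finset.Icc 1 d₀, u d ≤ p ^ 1 - 1) ∧
      (p ^ 1 - 1) ∣ (∑ d ∈ Finset.Icc 1 d₀, u d * d) ∧ 0 < ∑ d ∈ Finset.Icc 1 d₀, u d * d ∧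
      s = ∑ d ∈ Finset.Icc 1 d₀, sp p (u d)} ≤ (p - 2) / d₀ + 1 := by
  set r := (p - 1) % d₀ with hr
  have hrlt : r < d₀ := Nat.mod_lt _ hd
  set u : ℕ → ℕ :=
    fun d => (if d = d₀ then (p - 1) / d₀ else 0) + (if d = r then (if r = 0 then 0 else 1) else 0)
    with hu
  have hdself : (p - 1) / d₀ ≤ p - 1 := Nat.div_le_self _ _
  have hlt : ∀ d, u d < p := by
    intro d
    rw [hu]; dsimp only
    split <;> split <;> first | omega | (split <;> omega)
  have hsum : ∑ d ∈ Finset.Icc 1 d₀, u d * d = p - 1 := by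
    simp only [hu, add_mul]
    rw [Finset.sum_add_distrib]
    have e1 : ∑ d ∈ Finset.Icc 1 d₀, (if d = d₀ then (p - 1) / d₀ else 0) * d
        = (p - 1) / d₀ * d₀ := by
      have h3 : ∀ d : ℕ, (if d = d₀ then (p - 1) / d₀ else 0) * d
          = if d = d₀ then (p - 1) / d₀ * d else 0 := by intro d; split <;> simp
      rw [Finset.sum_congr rfl fun d _ => h3 d, Finset.sum_ite_eq',
        if_pos (Finset.mem_Icc.mpr ⟨hd, le_refl d₀⟩)]
    have e2 : ∑ d ∈ Finset.Icc 1 d₀, (if d = r then (if r = 0 then 0 else 1) else 0) * d = r := by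
      have h3 : ∀ d : ℕ, (if d = r then (if r = 0 then 0 else 1) else 0) * d
          = if d = r then (if r = 0 then 0 else 1) * d else 0 := by intro d; split <;> simp
      rw [Finset.sum_congr rfl fun d _ => h3 d, Finset.sum_ite_eq']
      rcases eq_or_ne r 0 with h0 | h0
      · simp [h0]
      · rw [if_pos (Finset.mem_Icc.mpr ⟨by omega, by omega⟩), if_neg h0, one_mul]
    rw [e1, e2, mul_comm]
    rw [hr]
    exact Nat.div_add_mod (p - 1) d₀
  have hmem : (∑ d ∈ Finset.Icc 1 d₀, sp p (u d)) ∈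
      {s : ℕ | ∃ u : ℕ → ℕ, (∀ d ∈ Finset.Icc 1 d₀, u d ≤ p ^ 1 - 1) ∧
        (p ^ 1 - 1) ∣ (∑ d ∈ Finset.Icc 1 d₀, u d * d) ∧ 0 < ∑ d ∈ Finset.Icc 1 d₀, u d * d ∧
        s = ∑ d ∈ Finset.Icc 1 d₀, sp p (u d)} := by
    refine ⟨u, ?_, ?_, ?_, rfl⟩
    · intro d _; have := hlt d; rw [pow_one]; omega
    · rw [hsum, pow_one]
    · rw [hsum]; omega
  have hval : ∑ d ∈ Finset.Icc 1 d₀, sp p (u d) ≤ (p - 2) / d₀ + 1 := by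
    have hspu : ∀ d ∈ Finset.Icc 1 d₀, sp p (u d) = u d :=
      fun d _ => sp_small p (u d) hp (hlt d)
    rw [Finset.sum_congr rfl hspu]
    simp only [hu]
    rw [Finset.sum_add_distrib, Finset.sum_ite_eq', Finset.sum_ite_eq',
      if_pos (Finset.mem_Icc.mpr ⟨hd, le_refl d₀⟩)]
    rcases eq_or_ne r 0 with h0 | h0
    · -- d₀ divides p - 1
      obtain ⟨k, hk⟩ := Nat.dvd_of_mod_eq_zero (hr ▸ h0)
      have hk1 : 1 ≤ k := by
        rcases Nat.eq_zero_or_pos k with h | h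
        · subst h; omega
        · exact h
      have hq1 : (p - 1) / d₀ = k := by rw [hk, Nat.mul_div_cancel_left _ hd]
      have hstep : d₀ * (k - 1) + d₀ = d₀ * k := by
        rw [← Nat.mul_succ]; congr 1; omega
      have hp2e : p - 2 = d₀ * (k - 1) + (d₀ - 1) := by omega
      have hq2 : (p - 2) / d₀ = k - 1 := by
        rw [hp2e, Nat.mul_add_div hd, Nat.div_eq_of_lt (by omega), add_zero]
      rw [hq1, hq2]
      simp [h0]
      omega
    · have hp1 : p - 1 = (p - 2) + 1 := by omega
      have hnd : ¬ d₀ ∣ (p - 2) + 1 := by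
        rw [← hp1]
        intro hdvd
        obtain ⟨c, hc⟩ := hdvd
        apply h0
        rw [hr, hc]
        exact Nat.mul_mod_right d₀ c
      have hq12 : (p - 1) / d₀ = (p - 2) / d₀ := by
        rw [hp1, Nat.succ_div, if_neg hnd, add_zero]
      have hite : (if r ∈ Finset.Icc 1 d₀ then (if r = 0 then 0 else 1) else 0) ≤ 1 := by
        simp only [if_neg h0]
        split <;> omega
      omega
  exact le_trans (Nat.sInf_le hmem) hval

lemma ceil_eq_q (p d₀ : ℕ) (hp : 2 ≤ p) (hd : 0 < d₀) :
    (⌈((p : ℚ) - 1) / (d₀ : ℚ)⌉ : ℤ) = (((p - 2) / d₀ + 1 : ℕ) : ℤ) := by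
  have hdq : (0 : ℚ) < (d₀ : ℚ) := by exact_mod_cast hd
  have hmod := Nat.div_add_mod (p - 2) d₀
  have hmlt : (p - 2) % d₀ < d₀ := Nat.mod_lt _ hd
  set A : ℕ := (p - 2) / d₀ with hA
  have hA1 : d₀ * A ≤ p - 2 := by omega
  have hA2 : p - 1 ≤ d₀ * A + d₀ := by omega
  have c2 : ((p - 2 : ℕ) : ℚ) = (p : ℚ) - 2 := by
    rw [Nat.cast_sub (by omega : 2 ≤ p)]; norm_num
  have c1 : ((p - 1 : ℕ) : ℚ) = (p : ℚ) - 1 := by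
    rw [Nat.cast_sub (by omega : 1 ≤ p)]; norm_num
  have hA1q : (d₀ : ℚ) * (A : ℚ) ≤ (p : ℚ) - 2 := by
    rw [← c2]; exact_mod_cast hA1
  have hA2q : (p : ℚ) - 1 ≤ (d₀ : ℚ) * (A : ℚ) + d₀ := by
    rw [show (p : ℚ) - 1 = ((p - 1 : ℕ) : ℚ) from c1.symm]
    exact_mod_cast hA2
  rw [Int.ceil_eq_iff]
  constructor
  · rw [lt_div_iff₀ hdq]
    push_cast
    nlinarith [hA1q]
  · rw [div_le_iff₀ hdq]
    push_cast
    nlinarith [hA2q]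

/-- For `d₀ < p` and `D = {1,...,d₀}`, `δ_{D,p} = (1/(p−1))·⌈(p−1)/d₀⌉`; equivalently the
minimum of `s_{D,p}(m)/m` over `m ≥ 1` is `⌈(p−1)/d₀⌉`. -/
theorem stmt_12 (p : ℕ) (hp : p.Prime) (d₀ : ℕ) (hd₀ : 0 < d₀) (hlt : d₀ < p)
    (D : Finset ℕ) (hD : D = Finset.Icc 1 d₀) :
    IsLeast {x : ℚ | ∃ m : ℕ, 1 ≤ m ∧ x = (sD p m D : ℚ) / m}
      ((⌈((p : ℚ) - 1) / (d₀ : ℚ)⌉ : ℤ) : ℚ) := by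
  subst hD
  have hp2 : 2 ≤ p := hp.two_le
  have hq := ceil_eq_q p d₀ hp2 hd₀
  have hlow : ∀ m, 1 ≤ m → m * ((p - 2) / d₀ + 1) ≤ sD p m (Finset.Icc 1 d₀) := by
    intro m hm
    have hne := sD_nonempty p d₀ m hp2 hd₀ hm
    exact sD_lower p d₀ m hp2 hd₀ hlt hm _ (Nat.sInf_mem hne)
  have h1 : sD p 1 (Finset.Icc 1 d₀) = (p - 2) / d₀ + 1 :=
    le_antisymm (sD_upper1 p d₀ hp2 hd₀ hlt)
      (by have := hlow 1 le_rfl; omega)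
  constructor
  · refine ⟨1, le_rfl, ?_⟩
    rw [hq, h1, Int.cast_natCast, Nat.cast_one, div_one]
  · rintro x ⟨m, hm, rfl⟩
    rw [hq]
    have hmq : (0 : ℚ) < (m : ℚ) := by exact_mod_cast hm
    rw [le_div_iff₀ hmq]
    have hl := hlow m hm
    rw [mul_comm] at hl
    exact_mod_cast hl
end

section
/- Let p = 3, n ≥ 1, and D = {1 ≤ i ≤ 3^{n+1} − 2 : gcd(3,i) = 1}. The elements of D of base-3 digit sum 2n+1 (which is the 3-weight of D, i.e. the maximum digit sum among elements of D) are exactly d_i = 3^{n+1} − 3^i − 1 for 0 ≤ i ≤ n. -/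
lemma sp_step (n : ℕ) : sp 3 n = n % 3 + sp 3 (n / 3) := by
  rcases Nat.eq_zero_or_pos n with h | h
  · simp [h, sp]
  · unfold sp
    rw [Nat.digits_def' (by norm_num : 1 < 3) h]
    simp

lemma sp_eq_zero : ∀ n : ℕ, sp 3 n = 0 → n = 0 := by
  intro n
  induction n using Nat.strong_induction_on with
  | _ n ih =>
    intro h
    rcases Nat.eq_zero_or_pos n with h0 | h0
    · exact h0
    · rw [sp_step] at h
      have h2 : sp 3 (n / 3) = 0 := by omega
      have := ih (n / 3) (Nat.div_lt_self h0 (by norm_num)) h2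
      omega

lemma sp_compl (m : ℕ) : ∀ d < 3 ^ m, sp 3 d + sp 3 (3 ^ m - 1 - d) = 2 * m := by
  induction m with
  | zero => intro d hd; interval_cases d; simp [sp]
  | succ m ih =>
    intro d hd
    have h3 : (0:ℕ) < 3 ^ m := Nat.pow_pos (by norm_num)
    have hps : (3:ℕ) ^ (m + 1) = 3 * 3 ^ m := by ring
    have hq : d / 3 < 3 ^ m := by omega
    have he : 3 ^ (m + 1) - 1 - d = 3 * (3 ^ m - 1 - d / 3) + (2 - d % 3) := by omega
    have h1 := sp_step d
    have h2 := sp_step (3 ^ (m + 1) - 1 - d)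
    have hmod : (3 ^ (m + 1) - 1 - d) % 3 = 2 - d % 3 := by omega
    have hdiv : (3 ^ (m + 1) - 1 - d) / 3 = 3 ^ m - 1 - d / 3 := by omega
    rw [hmod, hdiv] at h2
    have h4 := ih (d / 3) hq
    omega

lemma sp_pow (i : ℕ) : sp 3 (3 ^ i) = 1 := by
  induction i with
  | zero => simp [sp]
  | succ i ih =>
    rw [sp_step]
    have h3 : (0:ℕ) < 3 ^ i := Nat.pow_pos (by norm_num)
    have hps : (3:ℕ) ^ (i + 1) = 3 * 3 ^ i := by ring
    have hmod : 3 ^ (i + 1) % 3 = 0 := by omega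
    have hdiv : 3 ^ (i + 1) / 3 = 3 ^ i := by omega
    rw [hmod, hdiv, ih]

lemma sp_eq_one : ∀ e : ℕ, sp 3 e = 1 → ∃ i, e = 3 ^ i := by
  intro e
  induction e using Nat.strong_induction_on with
  | _ e ih =>
    intro h
    have he0 : 0 < e := by
      rcases Nat.eq_zero_or_pos e with h0 | h0
      · rw [h0] at h; simp [sp] at h
      · exact h0
    rw [sp_step] at h
    have hr3 : e % 3 = 0 ∨ e % 3 = 1 ∨ e % 3 = 2 := by omega
    rcases hr3 with hr | hr | hr
    · have h2 : sp 3 (e / 3) = 1 := by omega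
      obtain ⟨i, hi⟩ := ih (e / 3) (Nat.div_lt_self he0 (by norm_num)) h2
      exact ⟨i + 1, by rw [pow_succ]; omega⟩
    · have h2 : sp 3 (e / 3) = 0 := by omega
      have := sp_eq_zero _ h2
      exact ⟨0, by simp; omega⟩
    · exfalso
      have := sp_step (e / 3)
      omega

/-- For `D = {1 ≤ i ≤ 3^{n+1} − 2 : gcd(3,i) = 1}`, the maximal base-3 digit sum of an
element of `D` is `2n+1`, and the elements achieving it are exactly
`d_i = 3^{n+1} − 3^i − 1` for `0 ≤ i ≤ n`. -/
theorem stmt_18 (n : ℕ) (hn : 0 < n)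
    (D : Finset ℕ)
    (hD : D = (Finset.Icc 1 (3 ^ (n + 1) - 2)).filter fun i => Nat.gcd 3 i = 1) :
    (∀ d ∈ D, sp 3 d ≤ 2 * n + 1) ∧
    (∀ d ∈ D, sp 3 d = 2 * n + 1 ↔ ∃ i ≤ n, d = 3 ^ (n + 1) - 3 ^ i - 1) := by
  subst hD
  have hMpos : (9:ℕ) ≤ 3 ^ (n + 1) := by
    calc (9:ℕ) = 3 ^ 2 := by norm_num
    _ ≤ 3 ^ (n + 1) := Nat.pow_le_pow_right (by norm_num) (by omega)
  have key : ∀ d, d ∈ (Finset.Icc 1 (3 ^ (n + 1) - 2)).filter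
      (fun i => Nat.gcd 3 i = 1) → 1 ≤ d ∧ d ≤ 3 ^ (n + 1) - 2 := by
    intro d hd
    simp only [Finset.mem_filter, Finset.mem_Icc] at hd
    exact ⟨hd.1.1, hd.1.2⟩
  constructor
  · intro d hd
    obtain ⟨hd1, hd2⟩ := key d hd
    have hlt : d < 3 ^ (n + 1) := by omega
    have hc := sp_compl (n + 1) d hlt
    have hne : 3 ^ (n + 1) - 1 - d ≠ 0 := by omega
    have : sp 3 (3 ^ (n + 1) - 1 - d) ≠ 0 := fun h => hne (sp_eq_zero _ h)
    omega
  · intro d hd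
    obtain ⟨hd1, hd2⟩ := key d hd
    have hlt : d < 3 ^ (n + 1) := by omega
    have hc := sp_compl (n + 1) d hlt
    constructor
    · intro hsp
      have h1 : sp 3 (3 ^ (n + 1) - 1 - d) = 1 := by omega
      obtain ⟨i, hi⟩ := sp_eq_one _ h1
      have hile : i ≤ n := by
        by_contra hgt
        have : 3 ^ (n + 1) ≤ 3 ^ i := Nat.pow_le_pow_right (by norm_num) (by omega)
        omega
      exact ⟨i, hile, by omega⟩
    · rintro ⟨i, hi, rfl⟩
      have hpow : 3 ^ i < 3 ^ (n + 1) := Nat.pow_lt_pow_right (by norm_num) (by omega)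
      have hpos : (0:ℕ) < 3 ^ i := Nat.pow_pos (by norm_num)
      have hcompl : 3 ^ (n + 1) - 1 - (3 ^ (n + 1) - 3 ^ i - 1) = 3 ^ i := by omega
      have hc2 := sp_compl (n + 1) (3 ^ (n + 1) - 3 ^ i - 1) (by omega)
      rw [hcompl, sp_pow] at hc2
      omega
end
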